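/- If f : [0,1] → ℝ is continuous, then R_n(f;·) converges to f uniformly on [0,1] as n → ∞, where R_n is the Pólya–Bernstein-type operator with parameters a = x, b = 1−x, c = −min{x,1−x}/(n−1). -/

import Mathlib

/-- Generalized rising factorial with increment `h`: `x^(m,h) = x(x+h)···(x+(m-1)h)`. -/
noncomputable def rfac (x h : ℝ) (m : ℕ) : ℝ := ∏ i ∈ Finset.range m, (x + i * h)

/-- Pólya urn probability `p_{n,k}^{a,b,c}`. -/
noncomputable def polyaProb (a b c : ℝ) (n k : ℕ) : ℝ :=
  (n.choose k : ℝ) * rfac a c k * rfac b c (n - k) / rfac (a + b) c n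

/-- The operator `R_n(f;x)` with `c = -min{x,1-x}/(n-1)`. -/
noncomputable def Rop (n : ℕ) (f : ℝ → ℝ) (x : ℝ) : ℝ :=
  ∑ k ∈ Finset.range (n + 1),
    polyaProb x (1 - x) (-(min x (1 - x)) / ((n : ℝ) - 1)) n k * f ((k : ℝ) / n)

/-- Modulus of continuity of `f` on `[a,b]`. -/
noncomputable def modulus (f : ℝ → ℝ) (a b δ : ℝ) : ℝ :=
  sSup {d : ℝ | ∃ u ∈ Set.Icc a b, ∃ v ∈ Set.Icc a b, |u - v| ≤ δ ∧ d = |f u - f v|}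

lemma rfac_zero (x h : ℝ) : rfac x h 0 = 1 := by simp [rfac]

lemma rfac_succ (x h : ℝ) (m : ℕ) : rfac x h (m+1) = rfac x h m * (x + m*h) :=
  Finset.prod_range_succ _ _

lemma rfac_succ' (x h : ℝ) (m : ℕ) : rfac x h (m+1) = x * rfac (x+h) h m := by
  unfold rfac
  rw [Finset.prod_range_succ']
  have h1 : ∀ i ∈ Finset.range m, (x + (i+1:ℕ)*h) = ((x+h) + i*h) := by
    intro i _; push_cast; ring
  rw [Finset.prod_congr rfl h1]
  push_cast; ring

lemma rfac_nonneg (x h : ℝ) (m : ℕ) (hp : ∀ i : ℕ, i < m → 0 ≤ x + i*h) : 0 ≤ rfac x h m :=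
  Finset.prod_nonneg (fun i hi => hp i (Finset.mem_range.mp hi))

lemma rfac_pos (x h : ℝ) (m : ℕ) (hp : ∀ i : ℕ, i < m → 0 < x + i*h) : 0 < rfac x h m :=
  Finset.prod_pos (fun i hi => hp i (Finset.mem_range.mp hi))

lemma rfac_vandermonde (c a b : ℝ) (n : ℕ) :
    ∑ k ∈ Finset.range (n+1), (n.choose k : ℝ) * rfac a c k * rfac b c (n-k)
      = rfac (a+b) c n := by
  induction n with
  | zero => simp [rfac_zero]
  | succ n ih =>
    have e0 : ∀ k ∈ Finset.range (n+1),
        (((n+1).choose (k+1) : ℕ) : ℝ) * rfac a c (k+1) * rfac b c (n+1-(k+1))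
        = (n.choose k : ℝ) * rfac a c k * rfac b c (n-k) * (a + k*c)
          + (n.choose (k+1) : ℝ) * rfac a c (k+1) * rfac b c (n+1-(k+1)) := by
      intro k _
      have h1 : n+1-(k+1) = n-k := by omega
      rw [h1, Nat.choose_succ_succ, rfac_succ]
      push_cast
      ring
    have hsplit :
        ∑ k ∈ Finset.range (n+1+1), (((n+1).choose k : ℕ) : ℝ) * rfac a c k * rfac b c (n+1-k)
        = (∑ k ∈ Finset.range (n+1), (n.choose k : ℝ) * rfac a c k * rfac b c (n-k) * (a + k*c))
          + ∑ k ∈ Finset.range (n+1+1), (n.choose k : ℝ) * rfac a c k * rfac b c (n+1-k) := by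
      rw [Finset.sum_range_succ' (fun k => (((n+1).choose k : ℕ) : ℝ) * rfac a c k * rfac b c (n+1-k)) (n+1),
          Finset.sum_range_succ' (fun k => ((n.choose k : ℕ) : ℝ) * rfac a c k * rfac b c (n+1-k)) (n+1)]
      rw [Finset.sum_congr rfl e0, Finset.sum_add_distrib]
      simp [rfac_zero]
      ring
    have htrunc : ∑ k ∈ Finset.range (n+1+1), (n.choose k : ℝ) * rfac a c k * rfac b c (n+1-k)
        = ∑ k ∈ Finset.range (n+1), (n.choose k : ℝ) * rfac a c k * rfac b c (n-k) * (b + ((n:ℝ)-k)*c) := by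
      rw [Finset.sum_range_succ]
      simp only [Nat.choose_succ_self, Nat.cast_zero, zero_mul, add_zero]
      apply Finset.sum_congr rfl
      intro k hk
      have hk' : k ≤ n := Nat.lt_succ_iff.mp (Finset.mem_range.mp hk)
      have h1 : n+1-k = (n-k)+1 := by omega
      have h2 : ((n-k : ℕ):ℝ) = (n:ℝ) - k := by
        rw [Nat.cast_sub hk']
      rw [h1, rfac_succ, h2]
      ring
    rw [hsplit, htrunc, ← Finset.sum_add_distrib]
    have e2 : ∀ k ∈ Finset.range (n+1),
        (n.choose k : ℝ) * rfac a c k * rfac b c (n-k) * (a + k*c)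
          + (n.choose k : ℝ) * rfac a c k * rfac b c (n-k) * (b + ((n:ℝ)-k)*c)
        = (n.choose k : ℝ) * rfac a c k * rfac b c (n-k) * (a + b + n*c) := by
      intro k _; ring
    rw [Finset.sum_congr rfl e2, ← Finset.sum_mul, ih, ← rfac_succ]

lemma rfac_moment1 (c a b : ℝ) (n : ℕ) :
    ∑ k ∈ Finset.range (n+1), (k:ℝ) * ((n.choose k : ℝ) * rfac a c k * rfac b c (n-k))
      = n * a * rfac (a+b+c) c (n-1) := by
  cases n with
  | zero => simp
  | succ n =>
    rw [Finset.sum_range_succ']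
    simp only [Nat.cast_zero, zero_mul, add_zero]
    have e : ∀ k ∈ Finset.range (n+1),
        (((k+1:ℕ)):ℝ) * ((((n+1).choose (k+1) : ℕ):ℝ) * rfac a c (k+1) * rfac b c (n+1-(k+1)))
        = ((n:ℝ)+1) * a * ((n.choose k : ℝ) * rfac (a+c) c k * rfac b c (n-k)) := by
      intro k _
      have h1 : n+1-(k+1) = n-k := by omega
      have h2 : (((n+1).choose (k+1) : ℕ) : ℝ) * ((k:ℝ)+1) = ((n:ℝ)+1) * (n.choose k : ℝ) := by
        have := Nat.add_one_mul_choose_eq n k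
        exact_mod_cast congrArg (Nat.cast : ℕ → ℝ) this.symm
      rw [h1, rfac_succ']
      push_cast
      linear_combination (a * rfac (a+c) c k * rfac b c (n-k)) * h2
    rw [Finset.sum_congr rfl e, ← Finset.mul_sum]
    have h3 : a+c+b = a+b+c := by ring
    rw [rfac_vandermonde c (a+c) b n, h3]
    have h4 : n+1-1 = n := by omega
    rw [h4]
    push_cast
    ring

lemma rfac_moment2 (c a b : ℝ) (n : ℕ) :
    ∑ k ∈ Finset.range (n+1), (k:ℝ) * ((k:ℝ)-1) * ((n.choose k : ℝ) * rfac a c k * rfac b c (n-k))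
      = n * ((n:ℝ)-1) * a * (a+c) * rfac (a+b+2*c) c (n-2) := by
  cases n with
  | zero => simp
  | succ n =>
    rw [Finset.sum_range_succ']
    simp only [Nat.cast_zero, zero_mul, add_zero, zero_sub, mul_zero]
    have e : ∀ k ∈ Finset.range (n+1),
        (((k+1:ℕ)):ℝ) * ((((k+1:ℕ)):ℝ)-1) * ((((n+1).choose (k+1) : ℕ):ℝ) * rfac a c (k+1) * rfac b c (n+1-(k+1)))
        = ((n:ℝ)+1) * a * ((k:ℝ) * ((n.choose k : ℝ) * rfac (a+c) c k * rfac b c (n-k))) := by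
      intro k _
      have h1 : n+1-(k+1) = n-k := by omega
      have h2 : (((n+1).choose (k+1) : ℕ) : ℝ) * ((k:ℝ)+1) = ((n:ℝ)+1) * (n.choose k : ℝ) := by
        have := Nat.add_one_mul_choose_eq n k
        exact_mod_cast congrArg (Nat.cast : ℕ → ℝ) this.symm
      rw [h1, rfac_succ']
      push_cast
      linear_combination ((k:ℝ) * a * rfac (a+c) c k * rfac b c (n-k)) * h2
    rw [Finset.sum_congr rfl e, ← Finset.mul_sum]
    rw [rfac_moment1 c (a+c) b n]
    have h3 : a+c+b+c = a+b+2*c := by ring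
    rw [h3]
    have h4 : n+1-2 = n-1 := by omega
    rw [h4]
    push_cast
    ring

lemma rfac_one_split (cc : ℝ) (n : ℕ) (hn : 2 ≤ n) :
    rfac 1 cc n = (1+cc) * rfac (1+2*cc) cc (n-2) ∧
    rfac (1+cc) cc (n-1) = (1+cc) * rfac (1+2*cc) cc (n-2) := by
  obtain ⟨q, rfl⟩ : ∃ q, n = q+2 := ⟨n-2, by omega⟩
  have h0 : q+2-1 = q+1 := by omega
  have h1 : q+2-2 = q := by omega
  rw [h0, h1]
  have e1 : rfac (1+cc) cc (q+1) = (1+cc) * rfac (1+cc+cc) cc q := rfac_succ' _ _ _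
  have e2 : rfac 1 cc (q+2) = 1 * rfac (1+cc) cc (q+1) := rfac_succ' 1 cc (q+1)
  rw [show (1:ℝ)+cc+cc = 1+2*cc by ring] at e1
  exact ⟨by rw [e2, e1]; ring, e1⟩

lemma polya_arith (N x m c : ℝ) (hN : 2 ≤ N) (hx0 : 0 ≤ x) (hx1 : x ≤ 1)
    (hm0 : 0 ≤ m) (hm2 : m ≤ 1/2) (hc : c*(N-1) = -m) : x*(1-x)*(1+N*c) ≤ 1+c := by
  have hN1 : (1:ℝ) ≤ N-1 := by linarith
  have hc0 : c ≤ 0 := by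
    by_contra h
    push_neg at h
    nlinarith [mul_pos h (show (0:ℝ) < N-1 by linarith)]
  have h1c : 1/2 ≤ 1+c := by
    nlinarith [mul_nonneg (by linarith : (0:ℝ) ≤ N-2) (neg_nonneg.mpr hc0)]
  have hNc0 : 0 ≤ 1+N*c := by
    have h3 : N*(c*(N-1)) = N*(-m) := by rw [hc]
    by_contra h
    push_neg at h
    have h4 : (1+N*c)*(N-1) < 0 := mul_neg_of_neg_of_pos h (by linarith)
    nlinarith [mul_le_mul_of_nonneg_left hm2 (by linarith : (0:ℝ) ≤ N)]
  have hNc1 : 1+N*c ≤ 1 := by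
    nlinarith [mul_nonneg (by linarith : (0:ℝ) ≤ N) (neg_nonneg.mpr hc0)]
  have hx4 : x*(1-x) ≤ 1/4 := by nlinarith [sq_nonneg (x - 1/2)]
  have hxx : 0 ≤ x*(1-x) := mul_nonneg hx0 (by linarith)
  nlinarith [mul_nonneg (by linarith : (0:ℝ) ≤ 1/4 - x*(1-x)) hNc0]

lemma polya_factors (n : ℕ) (hn : 2 ≤ n) (x : ℝ) (hx0 : 0 ≤ x) (hx1 : x ≤ 1)
    (c : ℝ) (hc : c = -(min x (1-x))/((n:ℝ)-1)) :
    (∀ i : ℕ, i < n → 0 ≤ x + i*c) ∧ (∀ i : ℕ, i < n → 0 ≤ (1-x) + i*c) ∧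
    (∀ i : ℕ, i < n → 1/2 ≤ 1 + i*c) := by
  have hN : (2:ℝ) ≤ (n:ℝ) := by exact_mod_cast hn
  have hm0 : 0 ≤ min x (1-x) := le_min hx0 (by linarith)
  have hmx : min x (1-x) ≤ x := min_le_left _ _
  have hm1x : min x (1-x) ≤ 1-x := min_le_right _ _
  have hm2 : min x (1-x) ≤ 1/2 := by linarith
  have hN1 : (0:ℝ) < (n:ℝ)-1 := by linarith
  have hcneg : -c*((n:ℝ)-1) = min x (1-x) := by rw [hc]; field_simp
  have key : ∀ i : ℕ, i < n → (i:ℝ)*(-c) ≤ min x (1-x) := by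
    intro i hi
    have hi' : (i:ℝ) ≤ (n:ℝ)-1 := by
      have h2 : (i:ℝ)+1 ≤ (n:ℝ) := by exact_mod_cast hi
      linarith
    have hcn : 0 ≤ -c := by
      rw [hc]
      rw [neg_div]
      rw [neg_neg]
      positivity
    nlinarith [mul_le_mul_of_nonneg_right hi' hcn]
  refine ⟨?_, ?_, ?_⟩ <;> intro i hi <;>
    have h := key i hi <;>
    have hring : (i:ℝ)*c = -((i:ℝ)*(-c)) := by ring
  · linarith
  · linarith
  · linarith

lemma polya_denom_pos (x : ℝ) (hx0 : 0 ≤ x) (hx1 : x ≤ 1) (n : ℕ) (hn : 2 ≤ n)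
    (c : ℝ) (hc : c = -(min x (1-x))/((n:ℝ)-1)) :
    0 < rfac (x+(1-x)) c n := by
  obtain ⟨hfx, hf1x, hf1⟩ := polya_factors n hn x hx0 hx1 c hc
  rw [show x+(1-x) = (1:ℝ) by ring]
  apply rfac_pos
  intro i hi
  have := hf1 i hi
  linarith

lemma polyaProb_nonneg (x : ℝ) (hx0 : 0 ≤ x) (hx1 : x ≤ 1) (n : ℕ) (hn : 2 ≤ n)
    (c : ℝ) (hc : c = -(min x (1-x))/((n:ℝ)-1)) (k : ℕ) :
    0 ≤ polyaProb x (1-x) c n k := by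
  obtain ⟨hfx, hf1x, hf1⟩ := polya_factors n hn x hx0 hx1 c hc
  have hDpos := polya_denom_pos x hx0 hx1 n hn c hc
  unfold polyaProb
  rcases le_or_gt k n with hk | hk
  · apply div_nonneg _ hDpos.le
    refine mul_nonneg (mul_nonneg (by positivity) ?_) ?_
    · exact rfac_nonneg _ _ _ (fun i hi => hfx i (lt_of_lt_of_le hi hk))
    · exact rfac_nonneg _ _ _ (fun i hi => hf1x i (by omega))
  · rw [Nat.choose_eq_zero_of_lt hk]
    simp

lemma polyaProb_sum_one (x : ℝ) (hx0 : 0 ≤ x) (hx1 : x ≤ 1) (n : ℕ) (hn : 2 ≤ n)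
    (c : ℝ) (hc : c = -(min x (1-x))/((n:ℝ)-1)) :
    ∑ k ∈ Finset.range (n+1), polyaProb x (1-x) c n k = 1 := by
  have hDpos := polya_denom_pos x hx0 hx1 n hn c hc
  unfold polyaProb
  rw [← Finset.sum_div, rfac_vandermonde]
  exact div_self (ne_of_gt hDpos)

lemma polya_var (x : ℝ) (hx0 : 0 ≤ x) (hx1 : x ≤ 1) (n : ℕ) (hn : 2 ≤ n)
    (c : ℝ) (hc : c = -(min x (1-x))/((n:ℝ)-1)) :
    ∑ k ∈ Finset.range (n+1), polyaProb x (1-x) c n k * ((k:ℝ)/(n:ℝ) - x)^2 ≤ 1/(n:ℝ) := by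
  obtain ⟨hfx, hf1x, hf1⟩ := polya_factors n hn x hx0 hx1 c hc
  have hN : (2:ℝ) ≤ (n:ℝ) := by exact_mod_cast hn
  have hn0 : (0:ℝ) < (n:ℝ) := by linarith
  have hn0' : (n:ℝ) ≠ 0 := ne_of_gt hn0
  have hE : 0 < rfac (1+2*c) c (n-2) := by
    apply rfac_pos
    intro i hi
    have h1 := hf1 (i+2) (by omega)
    have h2 : ((i+2:ℕ):ℝ) = (i:ℝ)+2 := by push_cast; ring
    rw [h2] at h1
    have hexp : ((i:ℝ)+2)*c = (i:ℝ)*c + 2*c := by ring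
    linarith
  have hc2 : 0 < 1+c := by
    have h1 := hf1 1 (by omega)
    have h2 : ((1:ℕ):ℝ)*c = c := by push_cast; ring
    rw [h2] at h1
    linarith
  obtain ⟨hsp1, hsp2⟩ := rfac_one_split c n hn
  have hD : rfac (x+(1-x)) c n = (1+c) * rfac (1+2*c) c (n-2) := by
    rw [show x+(1-x) = (1:ℝ) by ring, hsp1]
  have hterm : ∀ k ∈ Finset.range (n+1),
      polyaProb x (1-x) c n k * ((k:ℝ)/(n:ℝ) - x)^2
      = ((n.choose k : ℝ) * rfac x c k * rfac (1-x) c (n-k) * ((k:ℝ)/(n:ℝ) - x)^2)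
          / rfac (x+(1-x)) c n := by
    intro k _
    unfold polyaProb
    rw [div_mul_eq_mul_div]
  rw [Finset.sum_congr rfl hterm, ← Finset.sum_div, hD,
      div_le_iff₀ (by positivity)]
  have h2 : (0:ℝ) < (n:ℝ)^2 := by positivity
  refine le_of_mul_le_mul_left ?_ h2
  have expand : ∀ k ∈ Finset.range (n+1),
      (n:ℝ)^2 * ((n.choose k : ℝ) * rfac x c k * rfac (1-x) c (n-k) * ((k:ℝ)/(n:ℝ) - x)^2)
      = (k:ℝ) * ((k:ℝ)-1) * ((n.choose k : ℝ) * rfac x c k * rfac (1-x) c (n-k))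
        + (1 - 2*(n:ℝ)*x) * ((k:ℝ) * ((n.choose k : ℝ) * rfac x c k * rfac (1-x) c (n-k)))
        + (n:ℝ)^2*x^2 * ((n.choose k : ℝ) * rfac x c k * rfac (1-x) c (n-k)) := by
    intro k _
    field_simp
    ring
  rw [Finset.mul_sum, Finset.sum_congr rfl expand, Finset.sum_add_distrib,
      Finset.sum_add_distrib, ← Finset.mul_sum, ← Finset.mul_sum,
      rfac_moment2 c x (1-x) n, rfac_moment1 c x (1-x) n, rfac_vandermonde c x (1-x) n,
      show x+(1-x)+2*c = 1+2*c by ring, show x+(1-x)+c = 1+c by ring,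
      show x+(1-x) = (1:ℝ) by ring, hsp1, hsp2]
  have hR : (n:ℝ)^2 * (1/(n:ℝ) * ((1+c) * rfac (1+2*c) c (n-2)))
      = (n:ℝ)*((1+c) * rfac (1+2*c) c (n-2)) := by
    field_simp
  rw [hR]
  have hm0 : 0 ≤ min x (1-x) := le_min hx0 (by linarith)
  have hm2 : min x (1-x) ≤ 1/2 := by
    have := min_le_left x (1-x); have := min_le_right x (1-x); linarith
  have hcm : c*((n:ℝ)-1) = -(min x (1-x)) := by
    have hN1' : ((n:ℝ)-1) ≠ 0 := by
      have : (1:ℝ) ≤ (n:ℝ)-1 := by linarith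
      linarith
    rw [hc]; field_simp
  have harith : x*(1-x)*(1+(n:ℝ)*c) ≤ 1+c :=
    polya_arith (n:ℝ) x (min x (1-x)) c hN hx0 hx1 hm0 hm2 hcm
  nlinarith [mul_nonneg (mul_nonneg hn0.le hE.le)
      (by linarith : 0 ≤ (1+c) - x*(1-x)*(1+(n:ℝ)*c))]

lemma Rop_est (f : ℝ → ℝ) (M δ ε : ℝ) (hM0 : 0 < M) (hδ : 0 < δ) (hε : 0 < ε)
    (hMb : ∀ y ∈ Set.Icc (0:ℝ) 1, |f y| ≤ M)
    (huc : ∀ u ∈ Set.Icc (0:ℝ) 1, ∀ v ∈ Set.Icc (0:ℝ) 1, |u - v| < δ → |f u - f v| < ε/2)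
    (n : ℕ) (hn : 2 ≤ n) (x : ℝ) (hx : x ∈ Set.Icc (0:ℝ) 1) :
    |Rop n f x - f x| ≤ ε/2 + (2*M/δ^2) * (1/(n:ℝ)) := by
  obtain ⟨hx0, hx1⟩ := hx
  obtain ⟨c, hc⟩ : ∃ c : ℝ, c = -(min x (1-x)) / ((n:ℝ)-1) := ⟨_, rfl⟩
  have hnn : ∀ k, 0 ≤ polyaProb x (1-x) c n k :=
    fun k => polyaProb_nonneg x hx0 hx1 n hn c hc k
  have hone := polyaProb_sum_one x hx0 hx1 n hn c hc
  have hvar := polya_var x hx0 hx1 n hn c hc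
  have hn0 : (0:ℝ) < (n:ℝ) := by
    have : (0:ℕ) < n := by omega
    exact_mod_cast this
  have hRop : Rop n f x = ∑ k ∈ Finset.range (n+1),
      polyaProb x (1-x) c n k * f ((k:ℝ)/(n:ℝ)) := by
    rw [hc]; rfl
  have hsplit2 : ∑ k ∈ Finset.range (n+1), polyaProb x (1-x) c n k * (f ((k:ℝ)/(n:ℝ)) - f x)
      = (∑ k ∈ Finset.range (n+1), polyaProb x (1-x) c n k * f ((k:ℝ)/(n:ℝ)))
        - (∑ k ∈ Finset.range (n+1), polyaProb x (1-x) c n k) * f x := by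
    rw [Finset.sum_mul, ← Finset.sum_sub_distrib]
    apply Finset.sum_congr rfl
    intro k _
    ring
  have hdiff : Rop n f x - f x = ∑ k ∈ Finset.range (n+1),
      polyaProb x (1-x) c n k * (f ((k:ℝ)/(n:ℝ)) - f x) := by
    rw [hsplit2, hone, one_mul, hRop]
  rw [hdiff]
  have hK0 : (0:ℝ) ≤ 2*M/δ^2 := by positivity
  have hbound : ∀ k ∈ Finset.range (n+1),
      |polyaProb x (1-x) c n k * (f ((k:ℝ)/(n:ℝ)) - f x)|
      ≤ polyaProb x (1-x) c n k * (ε/2 + (2*M/δ^2) * ((k:ℝ)/(n:ℝ) - x)^2) := by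
    intro k hk
    have hk' : k ≤ n := by
      have := Finset.mem_range.mp hk; omega
    have hkx : (k:ℝ)/(n:ℝ) ∈ Set.Icc (0:ℝ) 1 := by
      constructor
      · positivity
      · rw [div_le_one hn0]
        exact_mod_cast hk'
    rw [abs_mul, abs_of_nonneg (hnn k)]
    apply mul_le_mul_of_nonneg_left _ (hnn k)
    rcases lt_or_ge |(k:ℝ)/(n:ℝ) - x| δ with h | h
    · have h1 := huc _ hkx _ ⟨hx0, hx1⟩ h
      have h2 : 0 ≤ (2*M/δ^2) * ((k:ℝ)/(n:ℝ) - x)^2 := by positivity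
      linarith
    · have hδ2 : δ^2 ≤ ((k:ℝ)/(n:ℝ) - x)^2 := by
        have h3 := abs_nonneg ((k:ℝ)/(n:ℝ) - x)
        have h4 : |(k:ℝ)/(n:ℝ) - x|^2 = ((k:ℝ)/(n:ℝ) - x)^2 := sq_abs _
        nlinarith
      have h2M : |f ((k:ℝ)/(n:ℝ)) - f x| ≤ 2*M := by
        have ha := hMb _ hkx
        have hb := hMb x ⟨hx0, hx1⟩
        have := abs_sub (f ((k:ℝ)/(n:ℝ))) (f x)
        calc |f ((k:ℝ)/(n:ℝ)) - f x| ≤ |f ((k:ℝ)/(n:ℝ))| + |f x| := by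
              simpa [sub_eq_add_neg, abs_neg] using abs_add_le (f ((k:ℝ)/(n:ℝ))) (-(f x))
          _ ≤ 2*M := by linarith
      have hkey : 2*M ≤ (2*M/δ^2) * ((k:ℝ)/(n:ℝ) - x)^2 := by
        have h1 : (2*M/δ^2)*δ^2 = 2*M := by field_simp
        calc 2*M = (2*M/δ^2)*δ^2 := h1.symm
          _ ≤ (2*M/δ^2) * ((k:ℝ)/(n:ℝ) - x)^2 := mul_le_mul_of_nonneg_left hδ2 hK0
      have hε2 : 0 ≤ ε/2 := by linarith
      linarith
  calc |∑ k ∈ Finset.range (n+1), polyaProb x (1-x) c n k * (f ((k:ℝ)/(n:ℝ)) - f x)|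
      ≤ ∑ k ∈ Finset.range (n+1), |polyaProb x (1-x) c n k * (f ((k:ℝ)/(n:ℝ)) - f x)| :=
        Finset.abs_sum_le_sum_abs _ _
    _ ≤ ∑ k ∈ Finset.range (n+1),
          polyaProb x (1-x) c n k * (ε/2 + (2*M/δ^2) * ((k:ℝ)/(n:ℝ) - x)^2) :=
        Finset.sum_le_sum hbound
    _ = (ε/2) * (∑ k ∈ Finset.range (n+1), polyaProb x (1-x) c n k)
        + (2*M/δ^2) * (∑ k ∈ Finset.range (n+1),
            polyaProb x (1-x) c n k * ((k:ℝ)/(n:ℝ) - x)^2) := by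
        rw [Finset.mul_sum, Finset.mul_sum, ← Finset.sum_add_distrib]
        apply Finset.sum_congr rfl
        intro k _
        ring
    _ ≤ ε/2 + (2*M/δ^2) * (1/(n:ℝ)) := by
        rw [hone, mul_one]
        exact add_le_add (le_refl _) (mul_le_mul_of_nonneg_left hvar hK0)

theorem Rop_tendstoUniformly (f : ℝ → ℝ) (hf : ContinuousOn f (Set.Icc (0 : ℝ) 1)) :
    TendstoUniformlyOn (fun n x => Rop n f x) f Filter.atTop (Set.Icc (0 : ℝ) 1) := by
  rw [Metric.tendstoUniformlyOn_iff]
  intro ε hε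
  have hcomp : IsCompact (Set.Icc (0:ℝ) 1) := isCompact_Icc
  obtain ⟨M0, hM0⟩ := hcomp.exists_bound_of_continuousOn hf
  have hMpos : (0:ℝ) < max M0 1 := lt_of_lt_of_le one_pos (le_max_right _ _)
  have hMb : ∀ y ∈ Set.Icc (0:ℝ) 1, |f y| ≤ max M0 1 := by
    intro y hy
    have := hM0 y hy
    rw [Real.norm_eq_abs] at this
    exact this.trans (le_max_left _ _)
  have huc0 := hcomp.uniformContinuousOn_of_continuous hf
  rw [Metric.uniformContinuousOn_iff] at huc0
  obtain ⟨δ, hδ, hucd⟩ := huc0 (ε/4) (by positivity)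
  obtain ⟨N, hNgt⟩ := exists_nat_gt (max 2 ((2*(max M0 1)/δ^2) * (4/ε)))
  rw [Filter.eventually_atTop]
  refine ⟨N, fun n hn => ?_⟩
  intro x hx
  have hNR : (N:ℝ) ≤ (n:ℝ) := by exact_mod_cast hn
  have h2N : (2:ℝ) < (N:ℝ) := lt_of_le_of_lt (le_max_left _ _) hNgt
  have hn2 : 2 ≤ n := by
    have h1 : (2:ℝ) ≤ (n:ℝ) := by linarith
    exact_mod_cast h1
  have huc : ∀ u ∈ Set.Icc (0:ℝ) 1, ∀ v ∈ Set.Icc (0:ℝ) 1,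
      |u - v| < δ → |f u - f v| < (ε/2)/2 := by
    intro u hu v hv h
    have := hucd u hu v hv (by rwa [Real.dist_eq])
    rw [Real.dist_eq] at this
    linarith
  have hest := Rop_est f (max M0 1) δ (ε/2) hMpos hδ (by positivity) hMb huc n hn2 x hx
  have hn0 : (0:ℝ) < (n:ℝ) := by linarith
  have htail : (2*(max M0 1)/δ^2) * (1/(n:ℝ)) < ε/4 := by
    have hKn : (2*(max M0 1)/δ^2) * (4/ε) < (n:ℝ) :=
      lt_of_lt_of_le (lt_of_le_of_lt (le_max_right _ _) hNgt) hNR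
    have hK0 : (0:ℝ) ≤ 2*(max M0 1)/δ^2 := by positivity
    have h5 : (2*(max M0 1)/δ^2) * (4/ε) * ε = 4 * (2*(max M0 1)/δ^2) := by
      field_simp
    have h6 : 4 * (2*(max M0 1)/δ^2) < (n:ℝ) * ε := by
      calc 4 * (2*(max M0 1)/δ^2) = (2*(max M0 1)/δ^2) * (4/ε) * ε := h5.symm
        _ < (n:ℝ) * ε := mul_lt_mul_of_pos_right hKn hε
    rw [mul_one_div, div_lt_div_iff₀ hn0 (by norm_num : (0:ℝ) < 4)]
    linarith
  rw [Real.dist_eq, abs_sub_comm]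
  calc |Rop n f x - f x| ≤ (ε/2)/2 + (2*(max M0 1)/δ^2) * (1/(n:ℝ)) := hest
    _ < ε := by linarith
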